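/- Let E be a normed space and φ : E^n → E^{n(n-1)/2} the linear map sending (v_1,...,v_n) to the family (v_i - v_j)_{i<j}. With the ℓ¹-type norm N_{1,s}(w_1,...,w_s) = ∑ ‖w_k‖ on each product space, the operator norm of φ equals n-1 (for n ≥ 2 and E nontrivial). -/
import Mathlib

lemma sum_pairs_aux {n : ℕ} (g : Fin n → Fin n → ℝ) :
    ∑ p ∈ Finset.univ.filter (fun p : Fin n × Fin n => p.1 < p.2), g p.1 p.2
      = ∑ i, ∑ j ∈ Finset.Ioi i, g i j := by
  rw [Finset.sum_filter, Fintype.sum_prod_type]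
  refine Finset.sum_congr rfl fun i _ => ?_
  rw [← Finset.sum_filter]
  congr 1
  ext j
  simp

lemma sum_pairs_eq {n : ℕ} (f : Fin n → ℝ) :
    ∑ p ∈ Finset.univ.filter (fun p : Fin n × Fin n => p.1 < p.2), (f p.1 + f p.2)
      = (n - 1 : ℕ) * ∑ i, f i := by
  rw [sum_pairs_aux (fun i j => f i + f j)]
  have h2 : ∑ i : Fin n, ∑ j ∈ Finset.Ioi i, f j
      = ∑ j : Fin n, ∑ _i ∈ Finset.Iio j, f j := by
    apply Finset.sum_comm'
    intro i j; simp
  calc ∑ i : Fin n, ∑ j ∈ Finset.Ioi i, (f i + f j)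
      = ∑ i : Fin n, ((Finset.Ioi i).card * f i) + ∑ j : Fin n, ((Finset.Iio j).card * f j) := by
        simp_rw [Finset.sum_add_distrib]
        rw [h2]
        simp [Finset.sum_const, nsmul_eq_mul]
    _ = ∑ i : Fin n, ((n - 1 : ℕ) : ℝ) * f i := by
        rw [← Finset.sum_add_distrib]
        refine Finset.sum_congr rfl fun i _ => ?_
        rw [← add_mul]
        congr 1
        rw [Fin.card_Ioi, Fin.card_Iio]
        norm_cast
        omega
    _ = (n - 1 : ℕ) * ∑ i, f i := by rw [Finset.mul_sum]

/-- With ℓ¹-type norms on the product spaces, the operator norm of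
`φ : (v₁,…,vₙ) ↦ (vᵢ - vⱼ)_{i<j}` equals `n - 1`:
`n - 1` is the least constant `C ≥ 0` with
`∑_{i<j} ‖vᵢ - vⱼ‖ ≤ C · ∑ᵢ ‖vᵢ‖` for all `v`. -/
theorem stmt_3 {E : Type*} [NormedAddCommGroup E] [NormedSpace ℝ E] [Nontrivial E]
    (n : ℕ) (hn : 2 ≤ n) :
    IsLeast {C : ℝ | 0 ≤ C ∧ ∀ v : Fin n → E,
        ∑ p ∈ Finset.univ.filter (fun p : Fin n × Fin n => p.1 < p.2),
            ‖v p.1 - v p.2‖ ≤ C * ∑ i, ‖v i‖}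
      (n - 1) := by
  have hcast : ((n - 1 : ℕ) : ℝ) = (n : ℝ) - 1 := by
    rw [Nat.cast_sub (by omega)]; norm_num
  constructor
  · refine ⟨by rw [← hcast]; positivity, fun v => ?_⟩
    calc ∑ p ∈ Finset.univ.filter (fun p : Fin n × Fin n => p.1 < p.2), ‖v p.1 - v p.2‖
        ≤ ∑ p ∈ Finset.univ.filter (fun p : Fin n × Fin n => p.1 < p.2), (‖v p.1‖ + ‖v p.2‖) :=
          Finset.sum_le_sum fun p _ => norm_sub_le _ _
      _ = ((n : ℝ) - 1) * ∑ i, ‖v i‖ := by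
          rw [sum_pairs_eq (fun i => ‖v i‖), hcast]
  · rintro C ⟨hC0, hC⟩
    obtain ⟨e, he⟩ := exists_ne (0 : E)
    set i0 : Fin n := ⟨0, by omega⟩ with hi0
    set v : Fin n → E := fun i => if i = i0 then e else 0 with hv
    have hi0bot : ∀ i : Fin n, i ≠ i0 → i0 < i := fun i h => by
      have : (0 : ℕ) < i.val := Nat.pos_of_ne_zero fun h' => h (Fin.ext h')
      exact Fin.lt_def.mpr this
    have hsum : ∑ i, ‖v i‖ = ‖e‖ := by
      rw [Finset.sum_eq_single i0]
      · simp [hv]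
      · intro b _ hb; simp [hv, hb]
      · simp
    have hlhs : ∑ p ∈ Finset.univ.filter (fun p : Fin n × Fin n => p.1 < p.2),
        ‖v p.1 - v p.2‖ = ((n : ℝ) - 1) * ‖e‖ := by
      rw [sum_pairs_aux (fun i j => ‖v i - v j‖)]
      rw [Finset.sum_eq_single i0]
      · have : ∀ j ∈ Finset.Ioi i0, ‖v i0 - v j‖ = ‖e‖ := by
          intro j hj
          have hj' : j ≠ i0 := (Finset.mem_Ioi.mp hj).ne'
          simp [hv, hj']
        rw [Finset.sum_congr rfl this, Finset.sum_const, Fin.card_Ioi]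
        simp only [nsmul_eq_mul]
        congr 1
      · intro i _ hi
        refine Finset.sum_eq_zero fun j hj => ?_
        have hji : i < j := Finset.mem_Ioi.mp hj
        have hj0 : j ≠ i0 := fun h => by
          exact absurd (h ▸ hji) (not_lt.mpr (hi0bot i hi).le)
        simp [hv, hi, hj0]
      · simp
    have := hC v
    rw [hlhs, hsum] at this
    have hepos : 0 < ‖e‖ := norm_pos_iff.mpr he
    exact le_of_mul_le_mul_right (by linarith) hepos
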